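/- Assume Q ≠ 0 and let τ be the least positive integer s such that there exist ℓ_1,...,ℓ_s in Q* generating Q* as a Q-module. Then τ ≤ D, and for every tuple (ℓ_1,...,ℓ_τ) of elements of Q* that generates Q* as a Q-module, the sequence of ideals ann(u_{ℓ_1},...,u_{ℓ_t}) for t = 1,...,τ is strictly decreasing and ann(u_{ℓ_1},...,u_{ℓ_τ}) = I. -/

import Mathlib

open MvPolynomial

/-- `⟨u ∣ f⟩ = ∑_m f_m u(m)`, the pairing of a sequence `u : ℕ^n → K`
with a polynomial `f ∈ K[X_1,…,X_n]`. -/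
noncomputable def seqBracket {K : Type*} [Field K] {n : ℕ}
    (u : (Fin n →₀ ℕ) → K) (f : MvPolynomial (Fin n) K) : K :=
  (AddMonoidAlgebra.coeff f).sum fun m c => c * u m

/-- The action of polynomials on sequences: `(f·u)(m) = ⟨u ∣ X^m f⟩`. -/
noncomputable def seqAct {K : Type*} [Field K] {n : ℕ}
    (f : MvPolynomial (Fin n) K) (u : (Fin n →₀ ℕ) → K) : (Fin n →₀ ℕ) → K :=
  fun m => seqBracket u (monomial m 1 * f)

/-- The sequence `u_ℓ(m) = ℓ(X^m mod I)` attached to a linear form `ℓ` on `K[X]/I`. -/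
noncomputable def useq {K : Type*} [Field K] {n : ℕ}
    (I : Ideal (MvPolynomial (Fin n) K))
    (ℓ : Module.Dual K (MvPolynomial (Fin n) K ⧸ I)) : (Fin n →₀ ℕ) → K :=
  fun m => ℓ (Ideal.Quotient.mk I (monomial m 1))

/-- `ℓ_1,…,ℓ_s` generate `Q*` as a `Q`-module: every `φ ∈ Q*` can be written
as `φ = ∑ g_i·ℓ_i` where `(g·ℓ)(h) = ℓ(gh)`. -/
def GeneratesDual {K : Type*} [Field K] {n : ℕ}
    (I : Ideal (MvPolynomial (Fin n) K)) {s : ℕ}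
    (ℓ : Fin s → Module.Dual K (MvPolynomial (Fin n) K ⧸ I)) : Prop :=
  ∀ φ : Module.Dual K (MvPolynomial (Fin n) K ⧸ I),
    ∃ g : Fin s → MvPolynomial (Fin n) K ⧸ I,
      φ = ∑ i, (ℓ i).comp (LinearMap.mulLeft K (g i))


section Abstract

variable {K : Type*} [Field K] {A : Type*} [CommRing A] [Algebra K A]

/-- The set of all `g·ℓ_i`. -/
def dSet {s : ℕ} (ℓ : Fin s → Module.Dual K A) : Set (Module.Dual K A) :=
  {φ | ∃ i g, φ = (ℓ i).comp (LinearMap.mulLeft K g)}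

/-- The set of all `g·ℓ_i` for `i < t`. -/
def dSetT {s : ℕ} (ℓ : Fin s → Module.Dual K A) (t : ℕ) : Set (Module.Dual K A) :=
  {φ | ∃ i : Fin s, (i : ℕ) < t ∧ ∃ g, φ = (ℓ i).comp (LinearMap.mulLeft K g)}

lemma dSetT_eq_dSet {s : ℕ} (ℓ : Fin s → Module.Dual K A) {t : ℕ} (h : s ≤ t) :
    dSetT ℓ t = dSet ℓ := by
  ext φ
  constructor
  · rintro ⟨i, _, g, rfl⟩; exact ⟨i, g, rfl⟩
  · rintro ⟨i, g, rfl⟩; exact ⟨i, lt_of_lt_of_le i.isLt h, g, rfl⟩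

/-- The map `(gᵢ) ↦ ∑ gᵢ·ℓᵢ` as a linear map. -/
noncomputable def dMap {s : ℕ} (ℓ : Fin s → Module.Dual K A) :
    (Fin s → A) →ₗ[K] Module.Dual K A where
  toFun g := ∑ i, (ℓ i).comp (LinearMap.mulLeft K (g i))
  map_add' g g' := by
    rw [← Finset.sum_add_distrib]
    refine Finset.sum_congr rfl fun i _ => ?_
    ext x
    simp [add_mul]
  map_smul' c g := by
    simp only [RingHom.id_apply]
    rw [Finset.smul_sum]
    refine Finset.sum_congr rfl fun i _ => ?_
    ext x
    simp [smul_mul_assoc]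

lemma gen_iff_span {s : ℕ} (ℓ : Fin s → Module.Dual K A) :
    (∀ φ : Module.Dual K A, ∃ g : Fin s → A,
        φ = ∑ i, (ℓ i).comp (LinearMap.mulLeft K (g i))) ↔
      Submodule.span K (dSet ℓ) = ⊤ := by
  constructor
  · intro h
    rw [eq_top_iff]
    intro φ _
    obtain ⟨g, rfl⟩ := h φ
    exact Submodule.sum_mem _ fun i _ => Submodule.subset_span ⟨i, g i, rfl⟩
  · intro h φ
    have hφ : φ ∈ Submodule.span K (dSet ℓ) := by rw [h]; trivial
    have hle : Submodule.span K (dSet ℓ) ≤ LinearMap.range (dMap ℓ) := by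
      rw [Submodule.span_le]
      rintro ψ ⟨i, g, rfl⟩
      refine ⟨(Pi.single i g : Fin s → A), ?_⟩
      have hd : dMap ℓ (Pi.single i g : Fin s → A) =
          ∑ j, (ℓ j).comp (LinearMap.mulLeft K ((Pi.single i g : Fin s → A) j)) := rfl
      rw [hd, Finset.sum_eq_single i]
      · rw [Pi.single_eq_same]
      · intro b _ hb
        rw [Pi.single_eq_of_ne hb, LinearMap.mulLeft_zero_eq_zero, LinearMap.comp_zero]
      · intro hi; exact absurd (Finset.mem_univ i) hi
    obtain ⟨g, hg⟩ := hle hφ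
    exact ⟨g, hg.symm⟩

lemma comp_mem_span {s : ℕ} (ℓ : Fin s → Module.Dual K A) (φ : Module.Dual K A)
    (hφ : φ ∈ Submodule.span K (dSet ℓ)) (g : A) :
    φ.comp (LinearMap.mulLeft K g) ∈ Submodule.span K (dSet ℓ) := by
  set C : Module.Dual K A →ₗ[K] Module.Dual K A :=
    LinearMap.lcomp K K (LinearMap.mulLeft K g) with hC
  have h1 : C φ ∈ Submodule.map C (Submodule.span K (dSet ℓ)) :=
    Submodule.mem_map_of_mem hφ
  rw [Submodule.map_span] at h1
  have h2 : ⇑C '' dSet ℓ ⊆ dSet ℓ := by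
    rintro _ ⟨ψ, ⟨i, a, rfl⟩, rfl⟩
    refine ⟨i, a * g, ?_⟩
    ext x
    simp [hC, mul_assoc]
  exact Submodule.span_mono h2 h1

lemma reduce_gen {s : ℕ} (ℓ : Fin (s + 1) → Module.Dual K A) (i₀ : Fin (s + 1))
    (h : ℓ i₀ ∈ Submodule.span K (dSet (ℓ ∘ i₀.succAbove)))
    (hgen : Submodule.span K (dSet ℓ) = ⊤) :
    Submodule.span K (dSet (ℓ ∘ i₀.succAbove)) = ⊤ := by
  rw [eq_top_iff, ← hgen, Submodule.span_le]
  rintro φ ⟨i, g, rfl⟩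
  rcases eq_or_ne i i₀ with rfl | hne
  · exact comp_mem_span _ _ h g
  · obtain ⟨j, rfl⟩ := Fin.exists_succAbove_eq hne
    exact Submodule.subset_span ⟨j, g, rfl⟩

lemma mem_coann_dSetT {s : ℕ} (ℓ : Fin s → Module.Dual K A) (t : ℕ) (x : A) :
    x ∈ (Submodule.span K (dSetT ℓ t)).dualCoannihilator ↔
      ∀ i : Fin s, (i : ℕ) < t → ∀ g : A, ℓ i (g * x) = 0 := by
  rw [Submodule.mem_dualCoannihilator]
  constructor
  · intro h i hit g
    have := h _ (Submodule.subset_span ⟨i, hit, g, rfl⟩)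
    simpa using this
  · intro h φ hφ
    have hle : Submodule.span K (dSetT ℓ t) ≤
        LinearMap.ker (Module.Dual.eval K A x) := by
      rw [Submodule.span_le]
      rintro ψ ⟨i, hit, g, rfl⟩
      rw [SetLike.mem_coe, LinearMap.mem_ker, Module.Dual.eval_apply,
        LinearMap.comp_apply, LinearMap.mulLeft_apply]
      exact h i hit g
    have := hle hφ
    rw [LinearMap.mem_ker, Module.Dual.eval_apply] at this
    exact this

lemma span_eq_of_coann_eq [FiniteDimensional K A] (S S' : Set (Module.Dual K A))
    (h : (Submodule.span K S).dualCoannihilator =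
      (Submodule.span K S').dualCoannihilator) :
    Submodule.span K S = Submodule.span K S' := by
  rw [← Subspace.dualCoannihilator_dualAnnihilator_eq (W := Submodule.span K S), h,
    Subspace.dualCoannihilator_dualAnnihilator_eq]

lemma exists_gen_finrank [FiniteDimensional K A] :
    ∃ ℓ : Fin (Module.finrank K A) → Module.Dual K A,
      Submodule.span K (dSet ℓ) = ⊤ := by
  have hd : Module.finrank K (Module.Dual K A) = Module.finrank K A :=
    Subspace.dual_finrank_eq
  let b := Module.finBasis K (Module.Dual K A)
  refine ⟨fun i => b (Fin.cast hd.symm i), ?_⟩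
  rw [eq_top_iff, ← b.span_eq, Submodule.span_le]
  rintro _ ⟨j, rfl⟩
  refine Submodule.subset_span ⟨Fin.cast hd j, 1, ?_⟩
  rw [LinearMap.mulLeft_one, LinearMap.comp_id]
  rfl

end Abstract

section Quot
variable {K : Type*} [Field K] {n : ℕ} (I : Ideal (MvPolynomial (Fin n) K))

lemma seqBracket_useq (ℓ : Module.Dual K (MvPolynomial (Fin n) K ⧸ I))
    (f : MvPolynomial (Fin n) K) :
    seqBracket (useq I ℓ) f = ℓ (Ideal.Quotient.mk I f) := by
  set L : MvPolynomial (Fin n) K →ₗ[K] K :=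
    ℓ ∘ₗ (Ideal.Quotient.mkₐ K I).toLinearMap with hLdef
  have hL : ∀ p, L p = ℓ (Ideal.Quotient.mk I p) := by
    intro p; simp [hLdef]
  rw [← hL]
  unfold seqBracket useq
  conv_rhs => rw [f.as_sum]
  rw [map_sum, Finsupp.sum]
  refine Finset.sum_congr rfl fun m _ => ?_
  have h : (monomial m (coeff m f)) = coeff m f • monomial m 1 := by
    rw [smul_monomial, smul_eq_mul, mul_one]
  rw [h, map_smul, smul_eq_mul, hL]
  rfl

lemma seqAct_useq_eq_zero_iff (ℓ : Module.Dual K (MvPolynomial (Fin n) K ⧸ I))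
    (f : MvPolynomial (Fin n) K) :
    seqAct f (useq I ℓ) = 0 ↔
      ∀ q : MvPolynomial (Fin n) K ⧸ I, ℓ (q * Ideal.Quotient.mk I f) = 0 := by
  constructor
  · intro h q
    obtain ⟨p, rfl⟩ := Ideal.Quotient.mk_surjective q
    set L : MvPolynomial (Fin n) K →ₗ[K] K :=
      (ℓ ∘ₗ (Ideal.Quotient.mkₐ K I).toLinearMap) ∘ₗ LinearMap.mulRight K f with hL
    have hLm : ∀ m, L (monomial m 1) = 0 := by
      intro m
      have hm := congrFun h m
      rw [seqAct, seqBracket_useq] at hm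
      simpa [hL, LinearMap.mulRight_apply] using hm
    have hL0 : L = 0 := by
      apply (basisMonomials (Fin n) K).ext
      intro m
      simpa [coe_basisMonomials] using hLm m
    have := congrFun (congrArg DFunLike.coe hL0) p
    simpa [hL, LinearMap.mulRight_apply, map_mul] using this
  · intro h
    funext m
    rw [seqAct, seqBracket_useq, map_mul]
    exact h _

end Quot

set_option maxHeartbeats 1000000 in
/-- Assume `Q ≠ 0` and let `τ` be the least positive integer `s`
such that some `ℓ_1,…,ℓ_s ∈ Q*` generate `Q*` as a `Q`-module. Then `τ ≤ D`, and
for every tuple `(ℓ_1,…,ℓ_τ)` generating `Q*` as a `Q`-module, the ideals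
`ann(u_{ℓ_1},…,u_{ℓ_t})`, `t = 1,…,τ`, are strictly decreasing and
`ann(u_{ℓ_1},…,u_{ℓ_τ}) = I`. -/
theorem stmt7 {K : Type*} [Field K] {n : ℕ} (hn : 1 ≤ n)
    (I : Ideal (MvPolynomial (Fin n) K))
    (hI : FiniteDimensional K (MvPolynomial (Fin n) K ⧸ I))
    (hQ : Nontrivial (MvPolynomial (Fin n) K ⧸ I))
    (τ : ℕ) (hτpos : 0 < τ)
    (hτgen : ∃ ℓ : Fin τ → Module.Dual K (MvPolynomial (Fin n) K ⧸ I),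
        GeneratesDual I ℓ)
    (hτmin : ∀ s : ℕ, 0 < s →
        (∃ ℓ : Fin s → Module.Dual K (MvPolynomial (Fin n) K ⧸ I),
          GeneratesDual I ℓ) → τ ≤ s) :
    τ ≤ Module.finrank K (MvPolynomial (Fin n) K ⧸ I) ∧
    ∀ ℓ : Fin τ → Module.Dual K (MvPolynomial (Fin n) K ⧸ I),
      GeneratesDual I ℓ →
        (∀ t : ℕ, 1 ≤ t → t < τ →
          {f : MvPolynomial (Fin n) K |
              ∀ i : Fin τ, (i : ℕ) < t + 1 → seqAct f (useq I (ℓ i)) = 0} ⊂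
          {f : MvPolynomial (Fin n) K |
              ∀ i : Fin τ, (i : ℕ) < t → seqAct f (useq I (ℓ i)) = 0}) ∧
        (∀ f : MvPolynomial (Fin n) K,
          (∀ i, seqAct f (useq I (ℓ i)) = 0) ↔ f ∈ I) := by
  classical
  haveI := hI
  haveI := hQ
  constructor
  · obtain ⟨ℓ, hℓ⟩ := exists_gen_finrank (K := K) (A := MvPolynomial (Fin n) K ⧸ I)
    exact hτmin _ Module.finrank_pos ⟨ℓ, (gen_iff_span ℓ).mpr hℓ⟩
  · intro ℓ hgen
    have hspan : Submodule.span K (dSet ℓ) = ⊤ := (gen_iff_span ℓ).mp hgen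
    have hmemSet : ∀ (t : ℕ) (f : MvPolynomial (Fin n) K),
        (∀ i : Fin τ, (i : ℕ) < t → seqAct f (useq I (ℓ i)) = 0) ↔
          Ideal.Quotient.mk I f ∈ (Submodule.span K (dSetT ℓ t)).dualCoannihilator := by
      intro t f
      rw [mem_coann_dSetT]
      constructor
      · intro h i hit g
        exact (seqAct_useq_eq_zero_iff I _ f).mp (h i hit) g
      · intro h i hit
        rw [seqAct_useq_eq_zero_iff]
        exact h i hit
    refine ⟨?_, ?_⟩
    · intro t ht htτ
      rw [Set.ssubset_iff_subset_ne]
      refine ⟨fun f hf i hit => hf i (Nat.lt_succ_of_lt hit), ?_⟩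
      intro heq
      obtain ⟨s, rfl⟩ : ∃ s, τ = s + 1 := ⟨τ - 1, (Nat.succ_pred_eq_of_pos hτpos).symm⟩
      set i₀ : Fin (s + 1) := ⟨t, htτ⟩ with hi₀
      have hVeq : (Submodule.span K (dSetT ℓ (t + 1))).dualCoannihilator =
          (Submodule.span K (dSetT ℓ t)).dualCoannihilator := by
        ext x
        obtain ⟨f, rfl⟩ := Ideal.Quotient.mk_surjective x
        rw [← hmemSet, ← hmemSet]
        exact Set.ext_iff.mp heq f
      have hW := span_eq_of_coann_eq _ _ hVeq
      have hℓ₀ : ℓ i₀ ∈ Submodule.span K (dSetT ℓ t) := by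
        rw [← hW]
        refine Submodule.subset_span ⟨i₀, Nat.lt_succ_self t, 1, ?_⟩
        rw [LinearMap.mulLeft_one, LinearMap.comp_id]
      have hsub : dSetT ℓ t ⊆ dSet (ℓ ∘ i₀.succAbove) := by
        rintro φ ⟨i, hit, g, rfl⟩
        have hne : i ≠ i₀ := by
          intro h
          rw [h] at hit
          exact absurd hit (by simp [hi₀])
        obtain ⟨j, rfl⟩ := Fin.exists_succAbove_eq hne
        exact ⟨j, g, rfl⟩
      have hred := reduce_gen ℓ i₀ (Submodule.span_mono hsub hℓ₀) hspan
      have hgen2 : GeneratesDual I (ℓ ∘ i₀.succAbove) := (gen_iff_span _).mpr hred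
      have := hτmin s (by omega) ⟨_, hgen2⟩
      omega
    · intro f
      constructor
      · intro h
        rw [← Ideal.Quotient.eq_zero_iff_mem]
        refine (Module.forall_dual_apply_eq_zero_iff K _).mp fun φ => ?_
        obtain ⟨g, rfl⟩ := hgen φ
        rw [LinearMap.sum_apply]
        refine Finset.sum_eq_zero fun i _ => ?_
        rw [LinearMap.comp_apply, LinearMap.mulLeft_apply]
        exact (seqAct_useq_eq_zero_iff I _ f).mp (h i) (g i)
      · intro hf i
        rw [seqAct_useq_eq_zero_iff]
        intro q
        rw [Ideal.Quotient.eq_zero_iff_mem.mpr hf, mul_zero, map_zero]
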